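/- Let an extended N-series $G_*$ act on an extended N-series $K_*$. For each $m\geq 1$, the map $\tau_m:G_m\to \mathrm{Der}_m(\overline{K}_\bullet)$ sending $g$ to the family $(\tau_m(g)_i)_{i\geq 0}$, $\tau_m(g)_i(aK_{i+1})=[g,a]K_{m+i+1}$, is a group homomorphism, i.e., $\tau_m(gg')=\tau_m(g)+\tau_m(g')$ for all $g,g'\in G_m$. -/

import Mathlib

/-- Let an extended N-series `G_*` act on an extended N-series `K_*`.  For each
`m ≥ 1`, the `m`-th Johnson homomorphism `τₘ : Gₘ → Derₘ(K̄_•)`,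
`τₘ(g)ᵢ(aK_{i+1}) = [g,a]K_{m+i+1}`, is a group homomorphism:
`τₘ(gg') = τₘ(g) + τₘ(g')`, i.e. in every degree `i ≥ 0` and for every `a ∈ Kᵢ`,
`[gg', a] ≡ [g,a] ⬝ [g',a]  (mod K_{m+i+1})`, where `[g,a] = g(a)a⁻¹`. -/
theorem johnson_tau_homomorphism {G K : Type*} [Group G] [Group K]
    (φ : G →* MulAut K) (Kf : ℕ → Subgroup K)
    (hK0 : Kf 0 = ⊤) (hdesc : ∀ i, Kf (i + 1) ≤ Kf i)
    (hcomm : ∀ i j, ⁅Kf i, Kf j⁆ ≤ Kf (i + j))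
    (G' : ℕ → Subgroup G)
    (hG'0 : G' 0 = ⊤) (hG'desc : ∀ i, G' (i + 1) ≤ G' i)
    (hG'comm : ∀ i j, ⁅G' i, G' j⁆ ≤ G' (i + j))
    (hact : ∀ m n, ∀ g ∈ G' m, ∀ k ∈ Kf n, φ g k * k⁻¹ ∈ Kf (m + n)) :
    ∀ m, 1 ≤ m → ∀ g ∈ G' m, ∀ g' ∈ G' m, ∀ i, ∀ a ∈ Kf i,
      ((φ g a * a⁻¹) * (φ g' a * a⁻¹))⁻¹ *
        (φ (g * g') a * a⁻¹) ∈ Kf (m + i + 1) :=  by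
  intro m hm g hg g' hg' i a ha
  set b := φ g' a * a⁻¹ with hb_def
  set c := φ g a * a⁻¹ with hc_def
  set d := φ g b * b⁻¹ with hd_def
  have hb : b ∈ Kf (m + i) := hact m i g' hg' a ha
  have hc : c ∈ Kf (m + i) := hact m i g hg a ha
  have hd : d ∈ Kf (m + (m + i)) := hact m (m + i) g hg b hb
  have anti : ∀ j k : ℕ, k ≤ j → Kf j ≤ Kf k := by
    intro j
    induction j with
    | zero => intro k h; rw [Nat.le_zero.mp h]
    | succ n ih =>
      intro k h
      rcases Nat.lt_or_ge k (n + 1) with h' | h'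
      · exact (hdesc n).trans (ih k (Nat.lt_succ_iff.mp h'))
      · have : k = n + 1 := le_antisymm h h'
        subst this; exact le_rfl
  have hd' : d ∈ Kf (m + i + 1) := anti _ _ (by omega) hd
  open scoped commutatorElement in
  have hnorm : ∀ (x y : K) (n : ℕ), y ∈ Kf n → x * y * x⁻¹ ∈ Kf n := by
    intro x y n hy
    have h1 : ⁅x, y⁆ ∈ Kf (0 + n) :=
      hcomm 0 n (Subgroup.commutator_mem_commutator (by rw [hK0]; trivial) hy)
    rw [Nat.zero_add] at h1
    have h2 : x * y * x⁻¹ = ⁅x, y⁆ * y := by group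
    rw [h2]; exact mul_mem h1 hy
  open scoped commutatorElement in
  have hcomm2 : b⁻¹ * c⁻¹ * b * c ∈ Kf (m + i + 1) := by
    have h1 : ⁅b⁻¹, c⁻¹⁆ ∈ Kf ((m + i) + (m + i)) :=
      hcomm _ _ (Subgroup.commutator_mem_commutator (inv_mem hb) (inv_mem hc))
    have heq : b⁻¹ * c⁻¹ * b * c = ⁅b⁻¹, c⁻¹⁆ := by
      rw [commutatorElement_def]; group
    rw [heq]
    exact anti _ _ (by omega) h1
  have key : (c * b)⁻¹ * (φ (g * g') a * a⁻¹)
      = ((c * b)⁻¹ * d * (c * b)) * (b⁻¹ * c⁻¹ * b * c) := by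
    have h1 : φ (g * g') a = (d * b) * (c * a) := by
      rw [map_mul, MulAut.mul_apply]
      have h2 : φ g' a = b * a := by rw [hb_def]; group
      rw [h2, map_mul, hd_def, hc_def]; group
    rw [h1]; group
  rw [key]
  refine mul_mem ?_ hcomm2
  have := hnorm ((c * b)⁻¹) d _ hd'
  rwa [inv_inv] at this
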